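/- arXiv:2010.06643 — 8 statements merged into one kernel-verified Lean document; each statement's English description precedes it below -/
import Mathlib

section
/- For all integers n, x, y with 3 ≤ n and 1 ≤ y ≤ x ≤ n − 2, the count F_n(x,y) satisfies the recurrence F_n(x,y) = Σ_{i=0}^{y−1} F_{n−i−1}(x−i, y) + Σ_{j=0}^{y} F_{n−y−1}(x−y, j). -/
/-- Number of 0s in a bitstring (`false` represents 0, `true` represents 1). -/
def zeros (s : List Bool) : ℕ := s.count false

/-- Length of the longest run of consecutive 0s in a bitstring
(0 if the string has no 0s). -/
def maxrun (s : List Bool) : ℕ := ((s.splitOn true).map List.length).foldr max 0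


/-- `F n x y` is the number of bitstrings of length `n` with exactly `x` 0s
and longest run of 0s exactly `y`. -/
noncomputable def F (n x y : ℕ) : ℕ :=
  Nat.card {s : List Bool // s.length = n ∧ zeros s = x ∧ maxrun s = y}

lemma splitOn_rep (k : ℕ) (t : List Bool) :
    (List.replicate k false ++ true :: t).splitOn true
      = List.replicate k false :: t.splitOn true := by
  induction k with
  | zero => simp [List.splitOn, List.splitOnP_cons]
  | succ k ih =>
      rw [List.replicate_succ, List.cons_append, List.splitOn, List.splitOnP_cons]
      simp only [show (false == true) = false from rfl, if_false]
      rw [show List.splitOnP (· == true) (List.replicate k false ++ true :: t)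
            = (List.replicate k false ++ true :: t).splitOn true from rfl, ih]
      simp [List.replicate_succ, List.splitOn]

lemma maxrun_decomp (k : ℕ) (t : List Bool) :
    maxrun (List.replicate k false ++ true :: t) = max k (maxrun t) := by
  simp [maxrun, splitOn_rep]

lemma zeros_decomp (k : ℕ) (t : List Bool) :
    zeros (List.replicate k false ++ true :: t) = k + zeros t := by
  simp [zeros, List.count_append, List.count_replicate, List.count_cons]

lemma len_decomp (k : ℕ) (t : List Bool) :
    (List.replicate k false ++ true :: t).length = k + 1 + t.length := by
  simp; omega

lemma exists_decomp (s : List Bool) (h : true ∈ s) :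
    ∃ k t, s = List.replicate k false ++ true :: t := by
  induction s with
  | nil => simp at h
  | cons b u ih =>
      cases b with
      | true => exact ⟨0, u, rfl⟩
      | false =>
          have h' : true ∈ u := by simpa using h
          obtain ⟨k, t, rfl⟩ := ih h'
          exact ⟨k + 1, t, by simp [List.replicate_succ]⟩

lemma decomp_inj {k m : ℕ} {t t' : List Bool}
    (h : List.replicate k false ++ true :: t = List.replicate m false ++ true :: t') :
    k = m ∧ t = t' := by
  induction k generalizing m with
  | zero =>
      cases m with
      | zero => simpa using h
      | succ m => simp [List.replicate_succ] at h
  | succ k ih =>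
      cases m with
      | zero => simp [List.replicate_succ] at h
      | succ m =>
          simp only [List.replicate_succ, List.cons_append, List.cons.injEq] at h
          obtain ⟨h1, h2⟩ := ih h.2
          exact ⟨by omega, h2⟩

instance finite_aux (n : ℕ) (P : List Bool → Prop) :
    Finite {s : List Bool // s.length = n ∧ P s} := by
  have h : {s : List Bool | s.length = n ∧ P s}.Finite :=
    (List.finite_length_eq Bool n).subset (fun s hs => hs.1)
  exact h.to_subtype

lemma nat_card_sigma {ι : Type*} [Fintype ι] (f : ι → Type*) [∀ i, Finite (f i)] :
    Nat.card ((i : ι) × f i) = ∑ i, Nat.card (f i) := by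
  classical
  letI : ∀ i, Fintype (f i) := fun i => Fintype.ofFinite (f i)
  simp only [Nat.card_eq_fintype_card]
  exact Fintype.card_sigma

lemma max_iff_lt {k m y : ℕ} (h : k < y) : max k m = y ↔ m = y := by omega

lemma max_iff_eq {m y : ℕ} : max y m = y ↔ m ≤ y := by omega

theorem F_recurrence (n x y : ℕ) (hn : 3 ≤ n) (hy : 1 ≤ y) (hyx : y ≤ x) (hx : x ≤ n - 2) :
    F n x y = (∑ i ∈ Finset.range y, F (n - i - 1) (x - i) y)
      + ∑ j ∈ Finset.range (y + 1), F (n - y - 1) (x - y) j := by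
  have hxn : x < n := by omega
  set C : Fin (y + 1) → Type := fun k =>
    {t : List Bool // t.length = n - (k : ℕ) - 1 ∧
      (zeros t = x - (k : ℕ) ∧ max (k : ℕ) (maxrun t) = y)} with hC
  have key : Nat.card ((k : Fin (y + 1)) × C k) = F n x y := by
    apply Nat.card_eq_of_bijective (fun p =>
      (⟨List.replicate (p.1 : ℕ) false ++ true :: p.2.1, by
        have h1 := p.2.2.1
        have h2 := p.2.2.2.1
        have h3 := p.2.2.2.2
        have hk : (p.1 : ℕ) ≤ y := by omega
        refine ⟨?_, ?_, ?_⟩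
        · rw [len_decomp]; omega
        · rw [zeros_decomp]; omega
        · rw [maxrun_decomp]; exact h3⟩ :
        {s : List Bool // s.length = n ∧ zeros s = x ∧ maxrun s = y}))
    constructor
    · rintro ⟨k, t, ht⟩ ⟨k', t', ht'⟩ h
      simp only [Subtype.mk.injEq] at h
      obtain ⟨hk, htt⟩ := decomp_inj h
      have hkk : k = k' := Fin.ext hk
      subst hkk
      exact congrArg (Sigma.mk k) (Subtype.ext htt)
    · rintro ⟨s, hlen, hz, hm⟩
      have hts : true ∈ s := by
        by_contra h
        have hall : ∀ b ∈ s, false = b := by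
          intro b hb; cases b
          · rfl
          · exact absurd hb h
        have := List.count_eq_length.mpr hall
        rw [zeros] at hz; omega
      obtain ⟨k, t, rfl⟩ := exists_decomp s hts
      rw [maxrun_decomp] at hm
      rw [zeros_decomp] at hz
      rw [len_decomp] at hlen
      have hky : k ≤ y := by omega
      refine ⟨⟨⟨k, by omega⟩, ⟨t, ?_, ?_, ?_⟩⟩, rfl⟩
      · simpa using by omega
      · simpa using by omega
      · simpa using hm
  rw [← key, nat_card_sigma, Fin.sum_univ_castSucc]
  congr 1
  · rw [← Fin.sum_univ_eq_sum_range (fun i => F (n - i - 1) (x - i) y) y]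
    refine Finset.sum_congr rfl fun k _ => ?_
    have hk : ((k.castSucc : Fin (y+1)) : ℕ) = (k : ℕ) := rfl
    rw [hC]
    simp only [hk]
    rw [F]
    exact Nat.card_congr (Equiv.subtypeEquivRight fun t => by
      exact and_congr_right fun _ => and_congr_right fun _ => max_iff_lt k.2)
  · have hlast : ((Fin.last y : Fin (y+1)) : ℕ) = y := rfl
    have step1 : Nat.card (C (Fin.last y)) =
        Nat.card {t : List Bool // t.length = n - y - 1 ∧
          (zeros t = x - y ∧ maxrun t ≤ y)} := by
      rw [hC]
      exact Nat.card_congr (Equiv.subtypeEquivRight fun t => by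
        simp only [hlast]
        exact and_congr_right fun _ => and_congr_right fun _ => max_iff_eq)
    rw [step1, ← Fin.sum_univ_eq_sum_range (fun j => F (n - y - 1) (x - y) j) (y+1)]
    simp only [F]
    rw [← nat_card_sigma (fun j : Fin (y+1) =>
      {t : List Bool // t.length = n - y - 1 ∧ zeros t = x - y ∧ maxrun t = (j : ℕ)})]
    · symm
      apply Nat.card_eq_of_bijective (fun p =>
        ⟨p.2.1, p.2.2.1, p.2.2.2.1, by have := p.2.2.2.2; have := p.1.2; omega⟩)
      constructor
      · rintro ⟨j, t, ht⟩ ⟨j', t', ht'⟩ h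
        simp only [Subtype.mk.injEq] at h
        have hj : j = j' := Fin.ext (by rw [← ht.2.2, ← ht'.2.2, h])
        subst hj
        exact congrArg (Sigma.mk j) (Subtype.ext h)
      · rintro ⟨t, h1, h2, h3⟩
        exact ⟨⟨⟨maxrun t, by omega⟩, ⟨t, h1, h2, rfl⟩⟩, rfl⟩
end

section
/- For all integers n, x, y with 1 ≤ y ≤ x ≤ n − 2, the count S_n(x,y) satisfies the recurrence S_n(x,y) = Σ_{i=1}^{y−1} S_{n−i−1}(x−i, y) + Σ_{j=0}^{y} S_{n−y−1}(x−y, j). -/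
/-- A bitstring is solus if it has no two adjacent 1s. -/
def Solus (s : List Bool) : Prop := s.Chain' fun a b => ¬(a = true ∧ b = true)

/-- `S n x y` is the number of solus bitstrings of length `n` that start with the
bit 0, have exactly `x` 0s, and have longest run of 0s exactly `y`. -/
noncomputable def S (n x y : ℕ) : ℕ :=
  Nat.card {s : List Bool // s.length = n ∧ Solus s ∧ s.head? = some false ∧
    zeros s = x ∧ maxrun s = y}

namespace SRecAux

instance solusDec : DecidablePred Solus := fun s =>
  inferInstanceAs (Decidable (List.IsChain _ s))

/-- all bool lists of length `n` as a Finset -/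
def allB (n : ℕ) : Finset (List Bool) :=
  (Finset.univ : Finset (Fin n → Bool)).image List.ofFn

lemma mem_allB {n : ℕ} {s : List Bool} : s ∈ allB n ↔ s.length = n := by
  constructor
  · intro h
    simp only [allB, Finset.mem_image] at h
    obtain ⟨f, -, rfl⟩ := h
    simp
  · rintro rfl
    simp only [allB, Finset.mem_image]
    exact ⟨s.get, Finset.mem_univ _, List.ofFn_get s⟩

def T (n x y : ℕ) : Finset (List Bool) :=
  (allB n).filter (fun s => Solus s ∧ s.head? = some false ∧ zeros s = x ∧ maxrun s = y)

lemma mem_T {n x y : ℕ} {s : List Bool} : s ∈ T n x y ↔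
    s.length = n ∧ Solus s ∧ s.head? = some false ∧ zeros s = x ∧ maxrun s = y := by
  simp [T, Finset.mem_filter, mem_allB, and_assoc]

lemma S_eq_T (n x y : ℕ) : S n x y = (T n x y).card := by
  rw [← Nat.card_eq_finsetCard]
  exact Nat.card_congr (Equiv.subtypeEquivRight fun s => mem_T.symm)

/-- predicate "is the bit 0" -/
def pz : Bool → Bool := fun b => b == false

def g (i : ℕ) (s : List Bool) : List Bool := List.replicate i false ++ true :: s

/-- length of the initial run of 0s -/
def fr (s : List Bool) : ℕ := (s.takeWhile pz).length

lemma length_g (i : ℕ) (s : List Bool) : (g i s).length = i + 1 + s.length := by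
  simp [g]; omega

lemma zeros_g (i : ℕ) (s : List Bool) : zeros (g i s) = i + zeros s := by
  simp [zeros, g, List.count_append, List.count_cons, List.count_replicate]

lemma count_true_g (i : ℕ) (s : List Bool) :
    (g i s).count true = s.count true + 1 := by
  simp [g, List.count_append, List.count_cons, List.count_replicate]

lemma head?_g {i : ℕ} (hi : 1 ≤ i) (s : List Bool) : (g i s).head? = some false := by
  obtain ⟨k, rfl⟩ : ∃ k, i = k + 1 := ⟨i - 1, by omega⟩
  simp [g, List.replicate_succ]

lemma g_succ (k : ℕ) (s : List Bool) : g (k + 1) s = false :: g k s := by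
  simp [g, List.replicate_succ]

lemma splitOnP_g (i : ℕ) (s : List Bool) :
    (g i s).splitOnP (· == true) = List.replicate i false :: s.splitOnP (· == true) := by
  induction i with
  | zero => simp [g, List.splitOnP_cons]
  | succ k ih =>
      rw [g_succ, List.splitOnP_cons, ih]
      simp [List.replicate_succ]

lemma maxrun_g (i : ℕ) (s : List Bool) : maxrun (g i s) = max i (maxrun s) := by
  have h : (g i s).splitOn true = List.replicate i false :: s.splitOn true :=
    splitOnP_g i s
  simp [maxrun, h]

lemma solus_cons_false {l : List Bool} : Solus (false :: l) ↔ Solus l := by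
  simp [Solus, List.Chain', List.isChain_cons]

lemma solus_g {i : ℕ} {s : List Bool} (hs : Solus s) (hh : s.head? = some false) :
    Solus (g i s) := by
  induction i with
  | zero =>
      show Solus (true :: s)
      rw [Solus, List.Chain', List.isChain_cons]
      refine ⟨?_, hs⟩
      intro y hy
      rw [hh] at hy
      simp only [Option.mem_def, Option.some.injEq] at hy
      subst hy
      simp
  | succ k ih =>
      rw [g_succ, solus_cons_false]
      exact ih

lemma of_solus_g {i : ℕ} {s : List Bool} (h : Solus (g i s)) :
    Solus s ∧ s.head? ≠ some true := by
  have hsuf : (true :: s) <:+ g i s := List.suffix_append _ _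
  have h2 : Solus (true :: s) := List.IsChain.suffix h hsuf
  rw [Solus, List.Chain', List.isChain_cons] at h2
  refine ⟨h2.2, ?_⟩
  intro heq
  exact h2.1 true (by rw [heq]; rfl) ⟨rfl, rfl⟩

lemma count_true_add_count_false (s : List Bool) :
    s.count true + s.count false = s.length := by
  induction s with
  | nil => simp
  | cons a l ih => cases a <;> simp [List.count_cons] <;> omega

lemma takeWhile_g (i : ℕ) (s : List Bool) :
    (g i s).takeWhile pz = List.replicate i false ∧
      (g i s).dropWhile pz = true :: s := by
  induction i with
  | zero =>
      constructor <;> simp [g, List.takeWhile_cons, List.dropWhile_cons, pz]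
  | succ k ih =>
      rw [g_succ]
      constructor
      · rw [List.takeWhile_cons]
        simp [pz, ih.1, List.replicate_succ]
      · rw [List.dropWhile_cons]
        simp [pz, ih.2]

lemma fr_g (i : ℕ) (s : List Bool) : fr (g i s) = i := by
  simp [fr, (takeWhile_g i s).1]

lemma tail_drop_g (i : ℕ) (s : List Bool) : ((g i s).dropWhile pz).tail = s := by
  rw [(takeWhile_g i s).2]; rfl

lemma one_le_fr {s : List Bool} (h0 : s.head? = some false) : 1 ≤ fr s := by
  cases s with
  | nil => simp at h0
  | cons a l =>
      simp only [List.head?_cons, Option.some.injEq] at h0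
      subst h0
      rw [fr, List.takeWhile_cons]
      simp [pz]

lemma decomp {s : List Bool} (h1 : true ∈ s) :
    s = g (fr s) ((s.dropWhile pz).tail) := by
  have htw : s.takeWhile pz = List.replicate (fr s) false := by
    have : ∀ b ∈ s.takeWhile pz, b = false := by
      intro b hb
      have := List.mem_takeWhile_imp hb
      simpa [pz] using this
    exact List.eq_replicate_of_mem this
  have hne : s.dropWhile pz ≠ [] := by
    intro h
    rw [List.dropWhile_eq_nil_iff] at h
    have := h true h1
    simp [pz] at this
  obtain ⟨a, t, hat⟩ := List.exists_cons_of_ne_nil hne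
  have ha : a = true := by
    have hh := List.head?_dropWhile_not pz s
    rw [hat] at hh
    simp only [List.head?_cons] at hh
    cases a
    · simp [pz] at hh
    · rfl
  subst ha
  conv_lhs => rw [← List.takeWhile_append_dropWhile (p := pz) (l := s)]
  rw [htw, hat]
  rfl

lemma head?_eq_some_false {s : List Bool} (hne : s ≠ []) (hnt : s.head? ≠ some true) :
    s.head? = some false := by
  obtain ⟨a, t, rfl⟩ := List.exists_cons_of_ne_nil hne
  cases a
  · rfl
  · simp at hnt

/-- The key fiber bijection. -/
lemma fiber_card {n x y i j : ℕ} (hi1 : 1 ≤ i) (hij : max i j = y)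
    (hyx : y ≤ x) (hx : x ≤ n - 2) (hy : 1 ≤ y) :
    ((T n x y).filter (fun s => fr s = i ∧ maxrun ((s.dropWhile pz).tail) = j)).card
      = (T (n - i - 1) (x - i) j).card := by
  have hiy : i ≤ y := by rw [← hij]; exact le_max_left _ _
  have hn3 : 3 ≤ n := by omega
  apply Finset.card_bij' (fun s _ => (s.dropWhile pz).tail) (fun s' _ => g i s')
  · -- forward into target
    intro s hs
    rw [Finset.mem_filter] at hs
    obtain ⟨hsT, hfr, hmr⟩ := hs
    rw [mem_T] at hsT
    obtain ⟨hlen, hsol, hhd, hz, hmax⟩ := hsT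
    have hct : s.count true = n - x := by
      have := count_true_add_count_false s
      rw [hlen] at this; rw [zeros] at hz; omega
    have htmem : true ∈ s := by
      have : 0 < s.count true := by omega
      exact List.count_pos_iff.mp this
    have hdec := decomp htmem
    rw [hfr] at hdec
    set s' := (s.dropWhile pz).tail with hs'
    -- properties of s'
    have hlen' : s'.length = n - i - 1 := by
      have := length_g i s'
      rw [← hdec, hlen] at this; omega
    have hz' : zeros s' = x - i := by
      have := zeros_g i s'
      rw [← hdec, hz] at this
      have hix : i ≤ x := by omega
      omega
    have hsol' := of_solus_g (i := i) (s := s') (by rw [← hdec]; exact hsol)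
    have hct' : s'.count true = n - x - 1 := by
      have := count_true_g i s'
      rw [← hdec, hct] at this; omega
    have hne' : s' ≠ [] := by
      intro h
      rw [h] at hct'
      simp at hct'
      omega
    rw [mem_T]
    exact ⟨hlen', hsol'.1, head?_eq_some_false hne' hsol'.2, hz', hmr⟩
  · -- backward into source
    intro s' hs'
    rw [mem_T] at hs'
    obtain ⟨hlen', hsol', hhd', hz', hmr'⟩ := hs'
    rw [Finset.mem_filter, mem_T]
    refine ⟨⟨?_, solus_g hsol' hhd', head?_g hi1 s', ?_, ?_⟩, fr_g i s', ?_⟩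
    · rw [length_g, hlen']; omega
    · rw [zeros_g, hz']; omega
    · rw [maxrun_g, hmr', hij]
    · rw [tail_drop_g, hmr']
  · -- left inverse
    intro s hs
    rw [Finset.mem_filter] at hs
    obtain ⟨hsT, hfr, -⟩ := hs
    rw [mem_T] at hsT
    have hct : 0 < s.count true := by
      have h1 := count_true_add_count_false s
      rw [hsT.1] at h1
      have h2 := hsT.2.2.2.1
      rw [zeros] at h2
      omega
    have htmem := List.count_pos_iff.mp hct
    have hdec := decomp htmem
    rw [hfr] at hdec
    exact hdec.symm
  · -- right inverse
    intro s' _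
    exact tail_drop_g i s'

set_option maxHeartbeats 1000000 in
theorem S_recurrence' (n x y : ℕ) (hy : 1 ≤ y) (hyx : y ≤ x) (hx : x ≤ n - 2) :
    S n x y = (∑ i ∈ Finset.Icc 1 (y - 1), S (n - i - 1) (x - i) y)
      + ∑ j ∈ Finset.range (y + 1), S (n - y - 1) (x - y) j := by
  simp only [S_eq_T]
  have hfib : ∀ s ∈ T n x y, fr s ∈ Finset.Icc 1 y := by
    intro s hs
    rw [mem_T] at hs
    obtain ⟨hlen, hsol, hhd, hz, hmax⟩ := hs
    have h1 : 1 ≤ fr s := one_le_fr hhd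
    have hct : 0 < s.count true := by
      have := count_true_add_count_false s
      rw [hlen] at this; rw [zeros] at hz; omega
    have htmem := List.count_pos_iff.mp hct
    have hdec := decomp htmem
    have : maxrun s = max (fr s) (maxrun ((s.dropWhile pz).tail)) := by
      conv_lhs => rw [hdec]
      exact maxrun_g _ _
    rw [hmax] at this
    have : fr s ≤ y := by rw [this]; exact le_max_left _ _
    exact Finset.mem_Icc.mpr ⟨h1, this⟩
  rw [Finset.card_eq_sum_card_fiberwise hfib]
  obtain ⟨y', rfl⟩ : ∃ y', y = y' + 1 := ⟨y - 1, by omega⟩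
  rw [Finset.sum_Icc_succ_top (by omega)]
  congr 1
  · -- sum over i < y
    rw [show (y' + 1) - 1 = y' from rfl]
    apply Finset.sum_congr rfl
    intro i hi
    rw [Finset.mem_Icc] at hi
    have hfilter : (T n x (y' + 1)).filter (fun s => fr s = i)
        = (T n x (y' + 1)).filter
            (fun s => fr s = i ∧ maxrun ((s.dropWhile pz).tail) = y' + 1) := by
      apply Finset.filter_congr
      intro s hs
      rw [mem_T] at hs
      obtain ⟨hlen, hsol, hhd, hz, hmax⟩ := hs
      constructor
      · intro hfr
        refine ⟨hfr, ?_⟩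
        have hct : 0 < s.count true := by
          have := count_true_add_count_false s
          rw [hlen] at this; rw [zeros] at hz; omega
        have hdec := decomp (List.count_pos_iff.mp hct)
        have hm : maxrun s = max (fr s) (maxrun ((s.dropWhile pz).tail)) := by
          conv_lhs => rw [hdec]
          exact maxrun_g _ _
        rw [hmax, hfr] at hm
        have h1 : maxrun ((s.dropWhile pz).tail) ≤ max i (maxrun ((s.dropWhile pz).tail)) :=
          le_max_right _ _
        rw [← hm] at h1
        have h2 : y' + 1 ≤ i ∨ y' + 1 ≤ maxrun ((s.dropWhile pz).tail) :=
          le_max_iff.mp hm.le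
        omega
      · exact fun h => h.1
    rw [hfilter]
    exact fiber_card hi.1 (by omega) hyx hx hy
  · -- i = y case : fiber again over j = maxrun of the tail
    have hfib2 : ∀ s ∈ (T n x (y' + 1)).filter (fun s => fr s = y' + 1),
        maxrun ((s.dropWhile pz).tail) ∈ Finset.range (y' + 1 + 1) := by
      intro s hs
      rw [Finset.mem_filter] at hs
      obtain ⟨hsT, hfr⟩ := hs
      rw [mem_T] at hsT
      obtain ⟨hlen, hsol, hhd, hz, hmax⟩ := hsT
      have hct : 0 < s.count true := by
        have := count_true_add_count_false s
        rw [hlen] at this; rw [zeros] at hz; omega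
      have hdec := decomp (List.count_pos_iff.mp hct)
      have hm : maxrun s = max (fr s) (maxrun ((s.dropWhile pz).tail)) := by
        conv_lhs => rw [hdec]
        exact maxrun_g _ _
      rw [hmax] at hm
      have : maxrun ((s.dropWhile pz).tail) ≤ y' + 1 := by
        rw [hm]; exact le_max_right _ _
      exact Finset.mem_range.mpr (by omega)
    rw [Finset.card_eq_sum_card_fiberwise hfib2]
    apply Finset.sum_congr rfl
    intro j hj
    rw [Finset.mem_range] at hj
    rw [Finset.filter_filter]
    exact fiber_card (by omega) (by omega) hyx hx hy

end SRecAux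

theorem S_recurrence (n x y : ℕ) (hy : 1 ≤ y) (hyx : y ≤ x) (hx : x ≤ n - 2) :
    S n x y = (∑ i ∈ Finset.Icc 1 (y - 1), S (n - i - 1) (x - i) y)
      + ∑ j ∈ Finset.range (y + 1), S (n - y - 1) (x - y) j :=
  SRecAux.S_recurrence' n x y hy hyx hx
end

section
/- For all integers n ≥ 2 and all x, y ≥ 0, the number of solus bitstrings of length n with exactly x 0s and maxrun exactly y equals S_{n−1}(x,y) + S_n(x,y), where S_m(x,y) counts those solus bitstrings of length m with x 0s and maxrun y that start with the bit 0. -/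
lemma zeros_true_cons (t : List Bool) : zeros (true :: t) = zeros t := by
  simp [zeros]

lemma maxrun_true_cons (t : List Bool) : maxrun (true :: t) = maxrun t := by
  simp [maxrun, List.splitOn, List.splitOnP_cons]

lemma solus_true_cons (t : List Bool) :
    Solus (true :: t) ↔ Solus t ∧ ∀ b ∈ t.head?, b = false := by
  constructor
  · intro h
    refine ⟨h.tail, ?_⟩
    intro b hb
    rcases List.isChain_cons.1 h with ⟨h1, -⟩
    simpa using h1 b hb
  · rintro ⟨h1, h2⟩
    refine List.isChain_cons.2 ⟨?_, h1⟩
    intro b hb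
    simp [h2 b hb]

lemma tail_mem {n x y : ℕ} (hn : 2 ≤ n) (s : List Bool)
    (hlen : s.length = n) (hsol : Solus s) (hz : zeros s = x) (hm : maxrun s = y)
    (h : s.head? = some true) :
    s.tail.length = n - 1 ∧ Solus s.tail ∧ s.tail.head? = some false ∧
      zeros s.tail = x ∧ maxrun s.tail = y := by
  have hs : true :: s.tail = s := List.cons_head?_tail h
  rw [← hs] at hlen hsol hz hm
  rcases (solus_true_cons _).1 hsol with ⟨h1, h2⟩
  refine ⟨by simp at hlen ⊢; omega, h1, ?_, by simpa [zeros_true_cons] using hz,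
    by simpa [maxrun_true_cons] using hm⟩
  cases htl : s.tail with
  | nil => rw [htl] at hlen; simp at hlen; omega
  | cons a u =>
    have ha := h2 a (by rw [htl]; simp)
    simp only [List.tail_cons, htl, List.head?_cons, ha]

lemma head_false {n : ℕ} (hn : 2 ≤ n) (s : List Bool)
    (hlen : s.length = n) (h : ¬ s.head? = some true) : s.head? = some false := by
  cases s with
  | nil => simp at hlen; omega
  | cons a t => cases a <;> simp_all

lemma cons_mem {n x y : ℕ} (hn : 2 ≤ n) (t : List Bool)
    (hlen : t.length = n - 1) (hsol : Solus t) (hh : t.head? = some false)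
    (hz : zeros t = x) (hm : maxrun t = y) :
    (true :: t).length = n ∧ Solus (true :: t) ∧ zeros (true :: t) = x ∧
      maxrun (true :: t) = y := by
  refine ⟨by simp [hlen]; omega, ?_, by simpa [zeros_true_cons],
    by simpa [maxrun_true_cons]⟩
  exact (solus_true_cons t).2 ⟨hsol, by intro b hb; rw [hh] at hb; simpa using hb.symm⟩

instance instFin (n x y : ℕ) :
    Finite {s : List Bool // s.length = n ∧ Solus s ∧ zeros s = x ∧ maxrun s = y} :=
  Set.Finite.to_subtype (Set.Finite.subset (List.finite_length_eq Bool n) (fun s hs => hs.1))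

instance instFin' (n x y : ℕ) :
    Finite {s : List Bool // s.length = n ∧ Solus s ∧ s.head? = some false ∧
      zeros s = x ∧ maxrun s = y} :=
  Set.Finite.to_subtype (Set.Finite.subset (List.finite_length_eq Bool n) (fun s hs => hs.1))

theorem solus_count_split (n x y : ℕ) (hn : 2 ≤ n) :
    Nat.card {s : List Bool // s.length = n ∧ Solus s ∧ zeros s = x ∧ maxrun s = y}
      = S (n - 1) x y + S n x y := by
  rw [S, S, ← Nat.card_sum]
  refine Nat.card_congr
    { toFun := fun s =>
        if h : s.val.head? = some true then
          Sum.inl ⟨s.val.tail, tail_mem hn s.val s.prop.1 s.prop.2.1 s.prop.2.2.1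
            s.prop.2.2.2 h⟩
        else
          Sum.inr ⟨s.val, s.prop.1, s.prop.2.1, head_false hn s.val s.prop.1 h,
            s.prop.2.2.1, s.prop.2.2.2⟩
      invFun := fun g =>
        match g with
        | Sum.inl t => ⟨true :: t.val,
            cons_mem hn t.val t.prop.1 t.prop.2.1 t.prop.2.2.1 t.prop.2.2.2.1
              t.prop.2.2.2.2⟩
        | Sum.inr s => ⟨s.val, s.prop.1, s.prop.2.1, s.prop.2.2.2.1, s.prop.2.2.2.2⟩
      left_inv := ?_
      right_inv := ?_ }
  · rintro ⟨s, hs⟩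
    by_cases h : s.head? = some true
    · simp only [h, dif_pos]
      exact Subtype.ext (List.cons_head?_tail h)
    · simp [h]
  · rintro (⟨t, ht⟩ | ⟨s, hs⟩)
    · have h : (true :: t).head? = some true := rfl
      simp [h]
    · have h : ¬ s.head? = some true := by rw [hs.2.2.1]; simp
      simp [h]
end

section
/- For all integers n ≥ 3 and y ≥ 0: P_n(n−1, y) = 1 if 2y = n − 1; P_n(n−1, y) = 2 if n − 1 < 2y and y ≤ n − 2; and P_n(n−1, y) = 0 otherwise (in particular P_n(n−1, n−1) = 0). -/
/-- A bitstring is pinned if it is nonempty and both its first and last bits are 0. -/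
def Pinned (s : List Bool) : Prop :=
  s ≠ [] ∧ s.head? = some false ∧ s.getLast? = some false

/-- `P n x y` is the number of pinned bitstrings of length `n` with exactly `x` 0s
and longest run of 0s exactly `y`. -/
noncomputable def P (n x y : ℕ) : ℕ :=
  Nat.card {s : List Bool // s.length = n ∧ Pinned s ∧ zeros s = x ∧ maxrun s = y}

def f (i j : ℕ) : List Bool := List.replicate i false ++ true :: List.replicate j false

lemma zeros_f (i j : ℕ) : zeros (f i j) = i + j := by
  simp [zeros, f, List.count_append, List.count_replicate, List.count_cons]

lemma beqt : (fun x : Bool => x == true) = (fun x => x) := by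
  funext x; cases x <;> rfl

lemma splitOn_rep_s7 (j : ℕ) : (List.replicate j false).splitOn true = [List.replicate j false] := by
  induction j with
  | zero => rfl
  | succ k ih =>
    simp only [List.splitOn, List.replicate_succ, List.splitOnP_cons, beqt] at *
    simp [ih]

lemma splitOn_f (i j : ℕ) :
    (f i j).splitOn true = [List.replicate i false, List.replicate j false] := by
  induction i with
  | zero =>
    have := splitOn_rep_s7 j
    simp only [f, List.replicate, List.nil_append, List.splitOn, List.splitOnP_cons, beqt] at *
    simp [this]
  | succ k ih =>
    simp only [f, List.replicate_succ, List.cons_append, List.splitOn,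
      List.splitOnP_cons, beqt] at *
    simp [ih]

lemma maxrun_f (i j : ℕ) : maxrun (f i j) = max i j := by
  simp [maxrun, splitOn_f]

lemma pinned_f (i j : ℕ) (hi : 1 ≤ i) (hj : 1 ≤ j) : Pinned (f i j) := by
  obtain ⟨i, rfl⟩ := Nat.exists_eq_add_of_le' hi
  obtain ⟨j, rfl⟩ := Nat.exists_eq_add_of_le' hj
  refine ⟨by simp [f], ?_, ?_⟩
  · simp [f, List.replicate_succ]
  · have : f (i + 1) (j + 1) =
        (List.replicate (i + 1) false ++ true :: List.replicate j false) ++ [false] := by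
      simp [f, List.replicate_succ']
    rw [this, List.getLast?_concat]

lemma length_f (i j : ℕ) : (f i j).length = i + j + 1 := by simp [f]; ring

lemma count_tf (s : List Bool) : s.count true + s.count false = s.length := by
  induction s with
  | nil => rfl
  | cons a t ih => cases a <;> simp [List.count_cons] <;> omega

lemma all_false (s : List Bool) (h : s.count true = 0) : s = List.replicate s.length false := by
  rw [List.eq_replicate_iff]
  refine ⟨rfl, fun b hb => ?_⟩
  cases b
  · rfl
  · exact absurd (List.count_pos_iff.mpr hb) (by omega)

lemma one_true : ∀ s : List Bool, s.count true = 1 → ∃ i j, s = f i j := by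
  intro s hs
  induction s with
  | nil => simp at hs
  | cons a t ih =>
    cases a
    · rw [List.count_cons] at hs
      simp at hs
      obtain ⟨i, j, hij⟩ := ih hs
      exact ⟨i + 1, j, by simp [f, hij, List.replicate_succ]⟩
    · rw [List.count_cons] at hs
      simp at hs
      refine ⟨0, t.length, ?_⟩
      simp [f]
      exact all_false t hs

lemma f_inj : ∀ i i' j j' : ℕ, f i j = f i' j' → i = i' ∧ j = j' := by
  intro i
  induction i with
  | zero =>
    intro i' j j' h
    cases i' with
    | zero =>
      simp [f] at h
      exact ⟨rfl, h⟩
    | succ k => simp [f, List.replicate_succ] at h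
  | succ k ih =>
    intro i' j j' h
    cases i' with
    | zero => simp [f, List.replicate_succ] at h
    | succ k' =>
      simp only [f, List.replicate_succ, List.cons_append, List.cons.injEq, true_and] at h
      obtain ⟨h1, h2⟩ := ih k' j j' h
      exact ⟨by omega, h2⟩

lemma struct (n : ℕ) (hn : 3 ≤ n) (s : List Bool) (h1 : s.length = n) (h2 : Pinned s)
    (h3 : zeros s = n - 1) : ∃ i j, 1 ≤ i ∧ 1 ≤ j ∧ i + j = n - 1 ∧ s = f i j := by
  have hct := count_tf s
  have h1t : s.count true = 1 := by rw [zeros] at h3; omega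
  obtain ⟨i, j, rfl⟩ := one_true s h1t
  have hlen := length_f i j
  refine ⟨i, j, ?_, ?_, by omega, rfl⟩
  · rcases Nat.eq_zero_or_pos i with h | h
    · exfalso
      obtain ⟨_, hh, _⟩ := h2
      simp [f, h] at hh
    · exact h
  · rcases Nat.eq_zero_or_pos j with h | h
    · exfalso
      obtain ⟨_, _, hh⟩ := h2
      subst h
      simp [f, List.getLast?_append] at hh
    · exact h

lemma P_char (n y : ℕ) (hn : 3 ≤ n) (s : List Bool) :
    (s.length = n ∧ Pinned s ∧ zeros s = n - 1 ∧ maxrun s = y) ↔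
      ∃ i j, 1 ≤ i ∧ 1 ≤ j ∧ i + j = n - 1 ∧ max i j = y ∧ s = f i j := by
  constructor
  · rintro ⟨h1, h2, h3, h4⟩
    obtain ⟨i, j, hi, hj, hij, rfl⟩ := struct n hn s h1 h2 h3
    exact ⟨i, j, hi, hj, hij, by rw [← maxrun_f i j]; exact h4, rfl⟩
  · rintro ⟨i, j, hi, hj, hij, hm, rfl⟩
    exact ⟨by rw [length_f]; omega, pinned_f i j hi hj,
      by rw [zeros_f]; omega, by rw [maxrun_f]; exact hm⟩

theorem P_boundary (n y : ℕ) (hn : 3 ≤ n) :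
    (2 * y = n - 1 → P n (n - 1) y = 1) ∧
    (n - 1 < 2 * y ∧ y ≤ n - 2 → P n (n - 1) y = 2) ∧
    (¬(2 * y = n - 1) ∧ ¬(n - 1 < 2 * y ∧ y ≤ n - 2) → P n (n - 1) y = 0) ∧
    P n (n - 1) (n - 1) = 0 := by
  have key0 : ∀ z, ¬(2 * z = n - 1) → ¬(n - 1 < 2 * z ∧ z ≤ n - 2) → P n (n - 1) z = 0 := by
    intro z hz1 hz2
    rw [P, Nat.card_eq_zero]
    left
    constructor
    rintro ⟨s, hs⟩
    obtain ⟨i, j, hi, hj, hij, hm, rfl⟩ := (P_char n z hn s).mp hs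
    rcases le_total i j with h | h
    · rw [max_eq_right h] at hm; omega
    · rw [max_eq_left h] at hm; omega
  refine ⟨?_, ?_, fun h => key0 y h.1 h.2, key0 (n - 1) (by omega) (by omega)⟩
  · intro hy
    rw [P, Nat.card_eq_one_iff_unique]
    constructor
    · constructor
      rintro ⟨s, hs⟩ ⟨t, ht⟩
      obtain ⟨i, j, hi, hj, hij, hm, rfl⟩ := (P_char n y hn s).mp hs
      obtain ⟨i', j', hi', hj', hij', hm', rfl⟩ := (P_char n y hn t).mp ht
      have e1 : i = y ∧ j = y := by
        rcases le_total i j with h | h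
        · rw [max_eq_right h] at hm; omega
        · rw [max_eq_left h] at hm; omega
      have e2 : i' = y ∧ j' = y := by
        rcases le_total i' j' with h | h
        · rw [max_eq_right h] at hm'; omega
        · rw [max_eq_left h] at hm'; omega
      simp only [Subtype.mk.injEq]
      rw [e1.1, e1.2, e2.1, e2.2]
    · exact ⟨⟨f y y, (P_char n y hn _).mpr ⟨y, y, by omega, by omega, by omega, by omega, rfl⟩⟩⟩
  · rintro ⟨hy1, hy2⟩
    rw [P, Nat.card_eq_two_iff]
    refine ⟨⟨f y (n - 1 - y), (P_char n y hn _).mpr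
        ⟨y, n - 1 - y, by omega, by omega, by omega, by omega, rfl⟩⟩,
      ⟨f (n - 1 - y) y, (P_char n y hn _).mpr
        ⟨n - 1 - y, y, by omega, by omega, by omega, by omega, rfl⟩⟩, ?_, ?_⟩
    · intro h
      have := (f_inj _ _ _ _ (congrArg Subtype.val h)).1
      omega
    · rw [Set.eq_univ_iff_forall]
      rintro ⟨s, hs⟩
      obtain ⟨i, j, hi, hj, hij, hm, rfl⟩ := (P_char n y hn s).mp hs
      have : (i = y ∧ j = n - 1 - y) ∨ (i = n - 1 - y ∧ j = y) := by
        rcases le_total i j with h | h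
        · rw [max_eq_right h] at hm; omega
        · rw [max_eq_left h] at hm; omega
      rcases this with ⟨h1, h2⟩ | ⟨h1, h2⟩ <;> subst h1 <;> subst h2
      · exact Set.mem_insert _ _
      · exact Set.mem_insert_of_mem _ rfl
end

section
/- For all integers n, x, y with 1 ≤ y ≤ x and 2 ≤ x ≤ n − 2, the count G_n(x,y) satisfies the recurrence G_n(x,y) = Σ_{i=1}^{y−1} G_{n−i−1}(x−i, y) + Σ_{j=0}^{y} G_{n−y−1}(x−y, j). -/
/-- `G n x y` is the number of pinned solus bitstrings of length `n` with exactly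
`x` 0s and longest run of 0s exactly `y`. -/
noncomputable def G (n x y : ℕ) : ℕ :=
  Nat.card {s : List Bool // s.length = n ∧ Pinned s ∧ Solus s ∧
    zeros s = x ∧ maxrun s = y}

namespace GAux

/-- The basic building block: `i` zeros followed by a one followed by `t`. -/
def pat (i : ℕ) (t : List Bool) : List Bool := List.replicate i false ++ true :: t

lemma pat_zero (t : List Bool) : pat 0 t = true :: t := rfl

lemma pat_succ (i : ℕ) (t : List Bool) : pat (i + 1) t = false :: pat i t := by
  simp [pat, List.replicate_succ]

lemma pat_length (i : ℕ) (t : List Bool) : (pat i t).length = i + 1 + t.length := by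
  simp [pat]; omega

lemma zeros_pat (i : ℕ) (t : List Bool) : zeros (pat i t) = i + zeros t := by
  simp [zeros, pat, List.count_append, List.count_replicate, List.count_cons]

lemma splitOn_pat (i : ℕ) (t : List Bool) :
    (pat i t).splitOn true = List.replicate i false :: t.splitOn true := by
  unfold pat
  rw [List.splitOn, List.splitOn]
  exact List.splitOnP_first
    (fun x hx => by rw [List.eq_of_mem_replicate hx]; simp) true (by simp) t

lemma maxrun_pat (i : ℕ) (t : List Bool) : maxrun (pat i t) = max i (maxrun t) := by
  unfold maxrun
  rw [splitOn_pat]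
  simp

lemma head?_pat {i : ℕ} (hi : 1 ≤ i) (t : List Bool) : (pat i t).head? = some false := by
  obtain ⟨k, rfl⟩ : ∃ k, i = k + 1 := ⟨i - 1, by omega⟩
  rw [pat_succ]; rfl

lemma getLast?_pat (i : ℕ) {t : List Bool} (ht : t ≠ []) :
    (pat i t).getLast? = t.getLast? := by
  have h : pat i t = (List.replicate i false ++ [true]) ++ t := by simp [pat]
  rw [h, List.getLast?_append_of_ne_nil _ ht]

lemma pinned_pat {i : ℕ} (hi : 1 ≤ i) {t : List Bool} (ht : Pinned t) : Pinned (pat i t) := by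
  refine ⟨?_, head?_pat hi t, ?_⟩
  · simp [pat]
  · rw [getLast?_pat i ht.1]; exact ht.2.2

lemma solus_pat (i : ℕ) {t : List Bool} (hh : t.head? = some false) (ht : Solus t) :
    Solus (pat i t) := by
  induction i with
  | zero =>
    rw [pat_zero]
    exact List.isChain_cons.mpr ⟨fun b hb => by rw [hh] at hb; simp_all, ht⟩
  | succ k ih =>
    rw [pat_succ]
    exact List.isChain_cons.mpr ⟨fun b hb => by simp, ih⟩

lemma chain_of_solus_pat {i : ℕ} {t : List Bool} (h : Solus (pat i t)) :
    List.Chain' (fun a b => ¬(a = true ∧ b = true)) (true :: t) := by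
  induction i with
  | zero => exact h
  | succ k ih =>
    rw [pat_succ] at h
    exact ih (List.isChain_cons.mp h).2

lemma solus_of_solus_pat {i : ℕ} {t : List Bool} (h : Solus (pat i t)) : Solus t :=
  (List.isChain_cons.mp (chain_of_solus_pat h)).2

lemma head?_of_solus_pat {i : ℕ} {t : List Bool} (h : Solus (pat i t)) (ht : t ≠ []) :
    t.head? = some false := by
  have h1 := (List.isChain_cons.mp (chain_of_solus_pat h)).1
  obtain ⟨b, u, rfl⟩ : ∃ b u, t = b :: u := by
    cases t with
    | nil => exact absurd rfl ht
    | cons b u => exact ⟨b, u, rfl⟩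
  have := h1 b rfl
  cases b
  · rfl
  · simp at this

lemma pat_inj : ∀ {i i' : ℕ} {t t' : List Bool}, pat i t = pat i' t' → i = i' ∧ t = t' := by
  intro i
  induction i with
  | zero =>
    intro i' t t' h
    cases i' with
    | zero =>
      rw [pat_zero, pat_zero] at h
      exact ⟨rfl, by injection h⟩
    | succ k =>
      rw [pat_zero, pat_succ] at h
      injection h with h1 h2
      simp at h1
  | succ k ih =>
    intro i' t t' h
    cases i' with
    | zero =>
      rw [pat_zero, pat_succ] at h
      injection h with h1 h2
      simp at h1
    | succ m =>
      rw [pat_succ, pat_succ] at h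
      injection h with h1 h2
      obtain ⟨h3, h4⟩ := ih h2
      exact ⟨by omega, h4⟩

/-- Every pinned solus string containing a `true` decomposes as `pat i t`. -/
lemma decomp : ∀ (s : List Bool), Pinned s → Solus s → true ∈ s →
    ∃ i t, 1 ≤ i ∧ Pinned t ∧ Solus t ∧ s = pat i t := by
  intro s
  induction s with
  | nil => intro hp; exact absurd rfl hp.1
  | cons b s ih =>
    intro hp hs hmem
    have hb : b = false := by
      have := hp.2.1; simp only [List.head?_cons, Option.some.injEq] at this; exact this
    subst hb
    cases s with
    | nil => simp at hmem
    | cons c u =>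
      cases c with
      | true =>
        have hu : u ≠ [] := by
          rintro rfl
          have := hp.2.2
          simp [List.getLast?] at this
        have hs' : List.Chain' (fun a b => ¬(a = true ∧ b = true)) (true :: u) :=
          (List.isChain_cons_cons.mp hs).2
        have hhead : u.head? = some false := by
          obtain ⟨d, v, rfl⟩ : ∃ d v, u = d :: v := by
            cases u with
            | nil => exact absurd rfl hu
            | cons d v => exact ⟨d, v, rfl⟩
          have := (List.isChain_cons.mp hs').1 d rfl
          cases d
          · rfl
          · simp at this
        have hlast : u.getLast? = some false := by
          have h2 := hp.2.2
          have : (false :: true :: u) = [false, true] ++ u := rfl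
          rw [this, List.getLast?_append_of_ne_nil _ hu] at h2
          exact h2
        refine ⟨1, u, le_refl 1, ⟨hu, hhead, hlast⟩, (List.isChain_cons.mp hs').2, ?_⟩
        simp [pat]
      | false =>
        have hne : (false :: u : List Bool) ≠ [] := by simp
        have hlast : (false :: u).getLast? = some false := by
          have h2 := hp.2.2
          have : (false :: false :: u) = [false] ++ (false :: u) := rfl
          rw [this, List.getLast?_append_of_ne_nil _ hne] at h2
          exact h2
        have hmem' : true ∈ (false :: u : List Bool) := by
          simp only [List.mem_cons] at hmem ⊢
          rcases hmem with h | h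
          · simp at h
          · exact h
        obtain ⟨i, t, hi, hpt, hst, heq⟩ :=
          ih ⟨hne, rfl, hlast⟩ hs.tail hmem'
        exact ⟨i + 1, t, by omega, hpt, hst, by rw [pat_succ, heq]⟩

instance instFinite (m : ℕ) (P : List Bool → Prop) :
    Finite {s : List Bool // s.length = m ∧ P s} := by
  apply Finite.of_injective (fun s : {s : List Bool // s.length = m ∧ P s} =>
    fun k : Fin m => s.1.getD k false)
  rintro ⟨a, ha, _⟩ ⟨b, hb, _⟩ h
  simp only [Subtype.mk.injEq]
  apply List.ext_getElem (by omega)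
  intro i h1 h2
  have := congrFun h ⟨i, by omega⟩
  simpa [List.getD_eq_getElem, h1, h2] using this

/-- The set counted by `G`. -/
abbrev Tty (n x y : ℕ) : Type := {s : List Bool // s.length = n ∧ Pinned s ∧ Solus s ∧
    zeros s = x ∧ maxrun s = y}

/-- The class of tails for a given first-run length `i`. -/
abbrev Bty (n x y i : ℕ) : Type := {t : List Bool // t.length = n - i - 1 ∧ Pinned t ∧ Solus t ∧
    zeros t = x - i ∧ max i (maxrun t) = y}

lemma nat_card_sigma {s : Finset ℕ} (B : ℕ → Type) [∀ i, Fintype (B i)] :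
    Nat.card (Σ i : s, B ↑i) = ∑ i ∈ s, Nat.card (B i) := by
  rw [Nat.card_eq_fintype_card, Fintype.card_sigma,
    ← Finset.sum_coe_sort s (fun i => Nat.card (B i))]
  exact Finset.sum_congr rfl fun i _ => (Nat.card_eq_fintype_card).symm

def packF (n x y : ℕ) (hyx : y ≤ x) (hxn : x + 2 ≤ n)
    (p : Σ i : (Finset.Icc 1 y : Finset ℕ), Bty n x y ↑i) : Tty n x y :=
  ⟨pat p.1.1 p.2.1, by
    obtain ⟨⟨i, hi⟩, ⟨t, hlen, hpt, hst, hz, hm⟩⟩ := p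
    dsimp only at hlen hz hm ⊢
    rw [Finset.mem_Icc] at hi
    refine ⟨?_, pinned_pat hi.1 hpt, solus_pat i hpt.2.1 hst, ?_, ?_⟩
    · rw [pat_length, hlen]; omega
    · rw [zeros_pat, hz]; omega
    · rw [maxrun_pat]; exact hm⟩

lemma packF_bijective (n x y : ℕ) (hy : 1 ≤ y) (hyx : y ≤ x) (hxn : x + 2 ≤ n) :
    Function.Bijective (packF n x y hyx hxn) := by
  constructor
  · rintro ⟨⟨i, hi⟩, ⟨t, ht⟩⟩ ⟨⟨i', hi'⟩, ⟨t', ht'⟩⟩ h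
    have h' : pat i t = pat i' t' := congrArg Subtype.val h
    obtain ⟨h1, h2⟩ := pat_inj h'
    subst h1; subst h2; rfl
  · rintro ⟨s, hlen, hpin, hsol, hz, hm⟩
    have hmem : true ∈ s := by
      by_contra hmem
      have hall : ∀ b ∈ s, false = b := by
        intro b hb
        cases b
        · rfl
        · exact absurd hb hmem
      have hc : s.count false = s.length := List.count_eq_length.mpr
        (fun b hb => by rw [← hall b hb])
      unfold zeros at hz
      omega
    obtain ⟨i, t, hi, hpt, hst, heq⟩ := decomp s hpin hsol hmem
    subst heq
    have hlen' := pat_length i t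
    have hz' := zeros_pat i t
    have hm' := maxrun_pat i t
    have hiy : i ≤ y := by rw [hm'] at hm; omega
    refine ⟨⟨⟨i, Finset.mem_Icc.mpr ⟨hi, hiy⟩⟩, ⟨t, ?_, hpt, hst, ?_, ?_⟩⟩, Subtype.ext rfl⟩
    · show t.length = n - i - 1
      omega
    · show zeros t = x - i
      omega
    · show max i (maxrun t) = y
      rw [hm'] at hm; exact hm

/-- First splitting step: classify by the length of the first run of zeros. -/
lemma step1 (n x y : ℕ) (hy : 1 ≤ y) (hyx : y ≤ x) (hxn : x + 2 ≤ n) :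
    G n x y = ∑ i ∈ Finset.Icc 1 y, Nat.card (Bty n x y i) := by
  haveI : ∀ i : ℕ, Fintype (Bty n x y i) := fun i => Fintype.ofFinite _
  have h1 : G n x y = Nat.card (Σ i : (Finset.Icc 1 y : Finset ℕ), Bty n x y ↑i) :=
    (Nat.card_congr (Equiv.ofBijective _ (packF_bijective n x y hy hyx hxn))).symm
  rw [h1, nat_card_sigma]

def packF2 (m z y : ℕ)
    (p : Σ j : (Finset.range (y + 1) : Finset ℕ), Tty m z ↑j) : Bty (m + y + 1) (z + y) y y :=
  ⟨p.2.1, by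
    obtain ⟨⟨j, hj⟩, ⟨t, hlen, hpt, hst, hz, hm⟩⟩ := p
    dsimp only at hlen hz hm ⊢
    rw [Finset.mem_range] at hj
    refine ⟨by omega, hpt, hst, by omega, by rw [hm]; omega⟩⟩

lemma packF2_bijective (m z y : ℕ) : Function.Bijective (packF2 m z y) := by
  constructor
  · rintro ⟨⟨j, hj⟩, ⟨t, ht⟩⟩ ⟨⟨j', hj'⟩, ⟨t', ht'⟩⟩ h
    have h' : t = t' := congrArg Subtype.val h
    subst h'
    have h2 : j = j' := by
      have e1 : maxrun t = j := ht.2.2.2.2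
      have e2 : maxrun t = j' := ht'.2.2.2.2
      omega
    subst h2; rfl
  · rintro ⟨t, hlen, hpt, hst, hz, hm⟩
    have hj : maxrun t ≤ y := by omega
    refine ⟨⟨⟨maxrun t, Finset.mem_range.mpr (by omega)⟩, ⟨t, ?_, hpt, hst, ?_, rfl⟩⟩,
      Subtype.ext rfl⟩
    · show t.length = m
      omega
    · show zeros t = z
      omega

/-- Second step: the `i = y` class splits by the value of `maxrun`. -/
lemma step2 (m z y : ℕ) :
    Nat.card (Bty (m + y + 1) (z + y) y y) = ∑ j ∈ Finset.range (y + 1), G m z j := by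
  haveI : ∀ j : ℕ, Fintype (Tty m z j) := fun j => Fintype.ofFinite _
  have h1 : Nat.card (Bty (m + y + 1) (z + y) y y)
      = Nat.card (Σ j : (Finset.range (y + 1) : Finset ℕ), Tty m z ↑j) :=
    (Nat.card_congr (Equiv.ofBijective _ (packF2_bijective m z y))).symm
  rw [h1, nat_card_sigma]
  rfl

/-- Third step: for `i < y` the class is just `G (n-i-1) (x-i) y`. -/
lemma step3 (n x y i : ℕ) (hiy : i < y) :
    Nat.card (Bty n x y i) = G (n - i - 1) (x - i) y := by
  apply Nat.card_congr
  apply Equiv.subtypeEquivRight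
  intro t
  constructor
  · rintro ⟨h1, h2, h3, h4, h5⟩; exact ⟨h1, h2, h3, h4, by omega⟩
  · rintro ⟨h1, h2, h3, h4, h5⟩; exact ⟨h1, h2, h3, h4, by omega⟩

end GAux

theorem G_recurrence (n x y : ℕ) (hy : 1 ≤ y) (hyx : y ≤ x) (hx2 : 2 ≤ x)
    (hx : x ≤ n - 2) :
    G n x y = (∑ i ∈ Finset.Icc 1 (y - 1), G (n - i - 1) (x - i) y)
      + ∑ j ∈ Finset.range (y + 1), G (n - y - 1) (x - y) j := by
  have hn : 4 ≤ n := by omega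
  have hxn : x + 2 ≤ n := by omega
  rw [GAux.step1 n x y hy hyx hxn]
  have hsplit : Finset.Icc 1 y = insert y (Finset.Icc 1 (y - 1)) := by
    ext a
    simp only [Finset.mem_Icc, Finset.mem_insert]
    omega
  have hnotmem : y ∉ Finset.Icc 1 (y - 1) := by
    simp only [Finset.mem_Icc]
    omega
  have hBy : GAux.Bty n x y y = GAux.Bty ((n - y - 1) + y + 1) ((x - y) + y) y y := by
    rw [show (n - y - 1) + y + 1 = n by omega, show (x - y) + y = x by omega]
  rw [hsplit, Finset.sum_insert hnotmem, hBy, GAux.step2, Nat.add_comm]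
  congr 1
  apply Finset.sum_congr rfl
  intro i hi
  rw [Finset.mem_Icc] at hi
  exact GAux.step3 _ _ _ _ (by omega)
end

section
/- For all integers n, x, y with 1 ≤ y ≤ x ≤ n: F_n(x,y) > 0 if and only if (y does not divide x and x + ⌊x/y⌋ ≤ n) or (y divides x and x + x/y − 1 ≤ n). -/
lemma no_true_pred {a : List Bool} (h : true ∉ a) : ∀ x ∈ a, ¬ (x == true) = true := by
  intro x hx
  cases x
  · simp
  · exact absurd hx h

lemma maxrun_cons_true (s : List Bool) : maxrun (true :: s) = maxrun s := by
  simp [maxrun, List.splitOn, List.splitOnP_cons]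

lemma maxrun_no_true {a : List Bool} (h : true ∉ a) : maxrun a = a.length := by
  have hs : a.splitOn true = [a] := List.splitOnP_eq_single (fun x hx => by simpa using no_true_pred h x hx)
  simp [maxrun, hs]

lemma maxrun_append {a : List Bool} (h : true ∉ a) (s : List Bool) :
    maxrun (a ++ true :: s) = max a.length (maxrun s) := by
  have hs : (a ++ true :: s).splitOn true = a :: s.splitOn true :=
    List.splitOnP_first (fun x hx => by simpa using no_true_pred h x hx) _ (by simp) _
  simp [maxrun, hs]

lemma length_eq (s : List Bool) : s.length = s.count false + s.count true := by
  induction s with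
  | nil => simp
  | cons b t ih =>
    have hf : List.count false (b :: t) = List.count false t + (if b = false then 1 else 0) := by
      rw [List.count_cons]; simp [beq_iff_eq]
    have ht : List.count true (b :: t) = List.count true t + (if b = true then 1 else 0) := by
      rw [List.count_cons]; simp [beq_iff_eq]
    cases b <;> simp only [hf, ht, List.length_cons, ih] <;> simp <;> omega

lemma key (s : List Bool) : ∀ a : List Bool, true ∉ a →
    zeros (a ++ s) ≤ maxrun (a ++ s) * (List.count true (a ++ s) + 1) := by
  induction s with
  | nil =>
    intro a ha
    have h1 := maxrun_no_true ha
    have h2 : List.count true a = 0 := List.count_eq_zero.2 ha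
    have h3 : zeros a = a.length := by
      have := length_eq a; simp [zeros]; omega
    simp [h3, h1, h2]
  | cons b t ih =>
    intro a ha
    cases b with
    | true =>
      have h1 := maxrun_append ha t
      have h2 : List.count true a = 0 := List.count_eq_zero.2 ha
      have hca : List.count false a = a.length := by
        have := length_eq a; omega
      have h4 := ih [] (by simp)
      simp only [List.nil_append] at h4
      have h5 : zeros (a ++ true :: t) = a.length + zeros t := by
        simp [zeros, List.count_append, hca]
      have h6 : List.count true (a ++ true :: t) = List.count true t + 1 := by
        simp [List.count_append, List.count_cons, h2]
      rw [h5, h6, h1]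
      have hl : a.length ≤ max a.length (maxrun t) := le_max_left _ _
      have hm : maxrun t ≤ max a.length (maxrun t) := le_max_right _ _
      calc a.length + zeros t ≤ max a.length (maxrun t) + maxrun t * (List.count true t + 1) :=
            Nat.add_le_add hl h4
        _ ≤ max a.length (maxrun t) + max a.length (maxrun t) * (List.count true t + 1) :=
            Nat.add_le_add_left (Nat.mul_le_mul_right _ hm) _
        _ = max a.length (maxrun t) * (List.count true t + 1 + 1) := by ring
    | false =>
      have := ih (a ++ [false]) (by simp [ha])
      simpa using this

def blk (y r : ℕ) : ℕ → List Bool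
  | 0 => List.replicate r false
  | j+1 => List.replicate y false ++ true :: blk y r j

lemma blk_zeros (y r : ℕ) : ∀ j, zeros (blk y r j) = r + j * y := by
  intro j; induction j with
  | zero => simp [blk, zeros]
  | succ k ih =>
    have h : zeros (blk y r (k+1)) = y + zeros (blk y r k) := by
      simp [blk, zeros, List.count_append]
    have h2 : (k+1) * y = k * y + y := by ring
    rw [h, ih, h2]; omega

lemma blk_length (y r : ℕ) : ∀ j, (blk y r j).length = r + j * (y + 1) := by
  intro j; induction j with
  | zero => simp [blk]
  | succ k ih =>
    have h : (blk y r (k+1)).length = y + 1 + (blk y r k).length := by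
      simp [blk]; omega
    have h2 : (k+1) * (y+1) = k * (y+1) + (y+1) := by ring
    rw [h, ih, h2]; omega

lemma blk_maxrun (y r : ℕ) (hr : r ≤ y) : ∀ j, maxrun (blk y r j) = if j = 0 then r else y := by
  intro j; induction j with
  | zero => simp [blk, maxrun_no_true (by simp : true ∉ List.replicate r false)]
  | succ k ih =>
    rw [blk, maxrun_append (by simp)]
    by_cases hk : k = 0
    · subst hk; simp [ih]; omega
    · simp [ih, hk]

lemma maxrun_pad (m : ℕ) (s : List Bool) :
    maxrun (List.replicate m true ++ s) = maxrun s := by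
  induction m with
  | zero => simp
  | succ k ih => simpa [List.replicate_succ, maxrun_cons_true] using ih

lemma exists_witness (n x y j r m : ℕ) (hry : r ≤ y) (hr : 1 ≤ r)
    (hjy : j = 0 → r = y) (hz : r + j * y = x) (hl : m + r + j * (y + 1) = n) :
    ∃ s : List Bool, s.length = n ∧ zeros s = x ∧ maxrun s = y := by
  refine ⟨List.replicate m true ++ blk y r j, ?_, ?_, ?_⟩
  · rw [List.length_append, List.length_replicate, blk_length]; omega
  · have hb := blk_zeros y r j
    simp only [zeros, List.count_append] at hb ⊢
    simp only [List.count_replicate]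
    simp
    omega
  · rw [maxrun_pad, blk_maxrun y r hry]
    split
    · exact hjy ‹_›
    · rfl

instance fin_sub (n x y : ℕ) :
    Finite {s : List Bool // s.length = n ∧ zeros s = x ∧ maxrun s = y} := by
  haveI : Finite {l : List Bool // l.length = n} :=
    (Finite.of_fintype (List.Vector Bool n) :)
  apply Finite.of_injective
    (f := fun (s : {s : List Bool // s.length = n ∧ zeros s = x ∧ maxrun s = y}) =>
      (⟨s.1, s.2.1⟩ : {l : List Bool // l.length = n}))
  intro a b h
  simp only [Subtype.mk.injEq] at h
  exact Subtype.ext h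

theorem F_pos_iff (n x y : ℕ) (hy : 1 ≤ y) (hyx : y ≤ x) (hx : x ≤ n) :
    0 < F n x y ↔
      (¬ y ∣ x ∧ x + x / y ≤ n) ∨ (y ∣ x ∧ x + x / y - 1 ≤ n) := by
  rw [F, Nat.card_pos_iff]
  constructor
  · rintro ⟨⟨s, hlen, hz, hm⟩, -⟩
    have hkey := key s [] (by simp)
    simp only [List.nil_append] at hkey
    rw [hz, hm] at hkey
    have hlen' := length_eq s
    rw [hlen] at hlen'
    have hz' : List.count false s = x := hz
    set ct := List.count true s with hct
    have hn : n = x + ct := by omega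
    by_cases hd : y ∣ x
    · right
      refine ⟨hd, ?_⟩
      have hq : x / y ≤ ct + 1 := by
        calc x / y ≤ (y * (ct + 1)) / y := Nat.div_le_div_right hkey
          _ = ct + 1 := Nat.mul_div_cancel_left _ (by omega)
      omega
    · left
      refine ⟨hd, ?_⟩
      have hlt : x < y * (ct + 1) := by
        rcases lt_or_eq_of_le hkey with h | h
        · exact h
        · exact absurd ⟨ct + 1, h⟩ hd
      have hq : x / y < ct + 1 := by
        rw [Nat.div_lt_iff_lt_mul (by omega : 0 < y)]
        rw [mul_comm]; exact hlt
      omega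
  · intro h
    constructor
    · set q := x / y with hq
      have hq1 : 1 ≤ q := (Nat.one_le_div_iff (by omega)).2 hyx
      obtain ⟨k, hk⟩ : ∃ k, q = k + 1 := ⟨q - 1, by omega⟩
      rcases h with ⟨hd, hn⟩ | ⟨hd, hn⟩
      · have hmod : x % y ≠ 0 := fun h0 => hd (Nat.dvd_of_mod_eq_zero h0)
        have hmodlt : x % y < y := Nat.mod_lt _ (by omega)
        have hzx : x % y + q * y = x := Nat.mod_add_div' x y
        have hr2 : q * (y + 1) = q * y + q := by ring
        obtain ⟨s, h1, h2, h3⟩ := exists_witness n x y q (x % y) (n - x - q)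
          (le_of_lt hmodlt) (by omega) (by omega) hzx (by omega)
        exact ⟨⟨s, h1, h2, h3⟩⟩
      · have hxy : q * y = x := Nat.div_mul_cancel hd
        rw [hk] at hxy hn
        have h1 : (k + 1) * y = k * y + y := by ring
        have h2 : k * (y + 1) = k * y + k := by ring
        obtain ⟨s, h1', h2', h3'⟩ := exists_witness n x y k y (n - x - k)
          le_rfl hy (fun _ => rfl) (by omega) (by omega)
        exact ⟨⟨s, h1', h2', h3'⟩⟩
    · infer_instance
end

section
/- For every integer N ≥ 2 there exists a bijection e between the 1-free compositions of N and the pinned solus bitstrings of length N − 1 such that for every 1-free composition c of N: the number of parts of c equals the number of 1s in e(c) plus 1, and the largest part of c equals maxrun(e(c)) plus 1. -/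
/-- encode a list of blocks as a bitstring -/
def enc (B : List ℕ) : List Bool :=
  List.intercalate [true] (B.map fun b => List.replicate (b - 1) false)

lemma enc_singleton (b : ℕ) : enc [b] = List.replicate (b-1) false := by
  simp [enc, List.intercalate]

lemma enc_cons (b : ℕ) (B : List ℕ) (h : B ≠ []) :
    enc (b :: B) = List.replicate (b-1) false ++ true :: enc B := by
  cases B with
  | nil => exact absurd rfl h
  | cons c B => simp [enc, List.intercalate]

lemma enc_splitOn (B : List ℕ) (hB : B ≠ []) :
    (enc B).splitOn true = B.map fun b => List.replicate (b - 1) false := by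
  apply List.splitOn_intercalate
  · intro l hl
    simp only [List.mem_map] at hl
    obtain ⟨b, _, rfl⟩ := hl
    intro h
    exact absurd (List.eq_of_mem_replicate h) (by simp)
  · simpa using hB

lemma enc_length (B : List ℕ) (hB : B ≠ []) (h2 : ∀ b ∈ B, 2 ≤ b) :
    (enc B).length + 1 = B.sum := by
  induction B with
  | nil => exact absurd rfl hB
  | cons b B ih =>
    cases B with
    | nil => simp [enc_singleton]; have := h2 b (by simp); omega
    | cons c B =>
      rw [enc_cons _ _ (by simp)]
      have := ih (by simp) (fun x hx => h2 x (List.mem_cons_of_mem _ hx))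
      have hb := h2 b (by simp)
      simp only [List.length_append, List.length_replicate, List.length_cons, List.sum_cons] at *
      omega

lemma enc_count (B : List ℕ) (hB : B ≠ []) :
    (enc B).count true + 1 = B.length := by
  induction B with
  | nil => exact absurd rfl hB
  | cons b B ih =>
    cases B with
    | nil =>
      rw [enc_singleton, List.count_eq_zero_of_not_mem (by simp [List.mem_replicate])]
      simp
    | cons c B =>
      rw [enc_cons _ _ (by simp)]
      have := ih (by simp)
      rw [List.count_append, List.count_eq_zero_of_not_mem (by simp [List.mem_replicate])]
      simp only [List.count_cons_self, List.length_cons] at *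
      omega

lemma enc_head (b : ℕ) (B : List ℕ) (hb : 2 ≤ b) : (enc (b :: B)).head? = some false := by
  cases B with
  | nil =>
    rw [enc_singleton]
    cases b with
    | zero => omega
    | succ n => cases n with
      | zero => omega
      | succ m => simp [List.replicate_succ]
  | cons c B =>
    rw [enc_cons _ _ (by simp)]
    cases b with
    | zero => omega
    | succ n => cases n with
      | zero => omega
      | succ m => simp [List.replicate_succ]

lemma enc_getLast (B : List ℕ) (hB : B ≠ []) (h2 : ∀ b ∈ B, 2 ≤ b) :
    (enc B).getLast? = some false := by
  induction B with
  | nil => exact absurd rfl hB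
  | cons b B ih =>
    cases B with
    | nil =>
      rw [enc_singleton]
      have hb := h2 b (by simp)
      obtain ⟨m, hm⟩ : ∃ m, b - 1 = m + 1 := ⟨b - 2, by omega⟩
      rw [hm, List.replicate_succ', List.getLast?_concat]
    | cons c B =>
      have h2' : ∀ x ∈ c :: B, 2 ≤ x := fun x hx => h2 x (List.mem_cons_of_mem _ hx)
      have hne : enc (c :: B) ≠ [] := by
        intro h
        have := enc_length (c :: B) (by simp) h2'
        rw [h] at this
        simp at this
        have hc := h2' c (by simp)
        have h3 : c ≤ (c :: B).sum := List.single_le_sum (fun x _ => Nat.zero_le x) _ (by simp)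
        omega
      rw [enc_cons _ _ (by simp),
        List.getLast?_append_of_ne_nil _ (by simp),
        show (true :: enc (c :: B)) = [true] ++ enc (c :: B) from rfl,
        List.getLast?_append_of_ne_nil _ hne]
      exact ih (by simp) h2'

lemma enc_solus (B : List ℕ) (h2 : ∀ b ∈ B, 2 ≤ b) : Solus (enc B) := by
  induction B with
  | nil => exact List.isChain_nil
  | cons b B ih =>
    cases B with
    | nil =>
      rw [enc_singleton]
      exact List.isChain_replicate_of_rel _ (by simp)
    | cons c B =>
      rw [enc_cons _ _ (by simp)]
      show List.Chain' (fun a b => ¬(a = true ∧ b = true)) _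
      rw [List.Chain', List.isChain_append]
      refine ⟨List.isChain_replicate_of_rel _ (by simp), ?_, ?_⟩
      · rw [List.isChain_cons]
        refine ⟨?_, ih (fun x hx => h2 x (List.mem_cons_of_mem _ hx))⟩
        intro y hy
        have hhead := enc_head c B (h2 c (by simp))
        rw [hhead] at hy
        simp at hy
        simp [hy]
      · intro x hx y hy
        have : x = false := by
          have := List.eq_of_mem_replicate (List.mem_of_mem_getLast? hx)
          exact this
        simp [this]

lemma foldr_max_pred (B : List ℕ) (hB : B ≠ []) (h2 : ∀ b ∈ B, 2 ≤ b) :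
    B.foldr max 0 = (B.map fun b => b - 1).foldr max 0 + 1 := by
  induction B with
  | nil => exact absurd rfl hB
  | cons b B ih =>
    cases B with
    | nil => have := h2 b (by simp); simp; omega
    | cons c B =>
      have := ih (by simp) (fun x hx => h2 x (List.mem_cons_of_mem _ hx))
      have hb := h2 b (by simp)
      simp only [List.foldr_cons, List.map_cons] at *
      omega

lemma dec_enc (B : List ℕ) (hB : B ≠ []) (h2 : ∀ b ∈ B, 2 ≤ b) :
    ((enc B).splitOn true).map (fun l => l.length + 1) = B := by
  rw [enc_splitOn B hB, List.map_map]
  conv_rhs => rw [← List.map_id B]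
  apply List.map_congr_left
  intro b hb
  have := h2 b hb
  simp only [Function.comp_apply, List.length_replicate, id]
  omega

lemma maxrun_enc (B : List ℕ) (hB : B ≠ []) :
    maxrun (enc B) = (B.map fun b => b - 1).foldr max 0 := by
  unfold maxrun
  rw [enc_splitOn B hB, List.map_map]
  congr 1
  apply List.map_congr_left
  intro b _
  simp

lemma head_dropWhile_not {α} (p : α → Bool) :
    ∀ l : List α, ∀ b l', l.dropWhile p = b :: l' → ¬ p b = true := by
  intro l
  induction l with
  | nil => intro b l' h; simp at h
  | cons a l ih =>
    intro b l' h
    by_cases hp : p a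
    · rw [List.dropWhile_cons_of_pos hp] at h
      exact ih b l' h
    · rw [List.dropWhile_cons_of_neg hp] at h
      cases h
      exact hp

lemma surj (n : ℕ) : ∀ s : List Bool, s.length ≤ n → s.head? = some false →
    s.getLast? = some false → Solus s →
    ∃ B : List ℕ, B ≠ [] ∧ (∀ b ∈ B, 2 ≤ b) ∧ enc B = s ∧ B.sum = s.length + 1 := by
  induction n with
  | zero =>
    intro s hl hh _ _
    rw [List.length_eq_zero_iff.mp (Nat.le_zero.mp hl)] at hh
    simp at hh
  | succ n ih =>
    intro s hl hh hg hsol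
    set t := s.takeWhile (· == false) with htdef
    set d := s.dropWhile (· == false) with hddef
    have hsd : t ++ d = s := List.takeWhile_append_dropWhile
    have ht : t = List.replicate t.length false :=
      List.eq_replicate_length.mpr fun b hb => by
        have := List.mem_takeWhile_imp hb; simpa using this
    have htlen : 1 ≤ t.length := by
      cases s with
      | nil => simp at hh
      | cons x s' =>
        have hx : x = false := by simpa using hh
        rw [htdef, hx]
        simp [List.takeWhile_cons]
    by_cases hd : d = []
    · rw [hd, List.append_nil] at hsd
      have hslen : s.length = t.length := by rw [← hsd]
      refine ⟨[s.length + 1], by simp, by simpa using (by omega : 2 ≤ s.length + 1),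
        ?_, by simp⟩
      rw [enc_singleton, Nat.add_sub_cancel, hslen, ← ht]
      exact hsd
    · obtain ⟨b, d2, hbd⟩ := List.exists_cons_of_ne_nil hd
      have hb : b = true := by
        have := head_dropWhile_not (· == false) s b d2 (by rw [← hddef]; exact hbd)
        simpa using this
      subst hb
      rw [hbd] at hsd
      have hd2ne : d2 ≠ [] := by
        intro h
        subst h
        rw [← hsd, List.getLast?_append_of_ne_nil _ (by simp)] at hg
        simp at hg
      have hgd2 : d2.getLast? = some false := by
        rw [← hsd, List.getLast?_append_of_ne_nil _ (by simp),
          show (true :: d2) = [true] ++ d2 from rfl,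
          List.getLast?_append_of_ne_nil _ hd2ne] at hg
        exact hg
      have hchain : List.Chain' (fun a b => ¬(a = true ∧ b = true)) (true :: d2) := by
        have hs := hsol
        rw [Solus, ← hsd, List.Chain', List.isChain_append] at hs
        exact hs.2.1
      rw [List.Chain', List.isChain_cons] at hchain
      have hh2 : d2.head? = some false := by
        cases d2 with
        | nil => exact absurd rfl hd2ne
        | cons c d3 =>
          have := hchain.1 c (by simp)
          cases c
          · rfl
          · simp at this
      have hslen' : s.length = t.length + (d2.length + 1) := by rw [← hsd]; simp
      have hslen : s.length = t.length + 1 + d2.length := by omega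
      have hlen2 : d2.length ≤ n := by omega
      obtain ⟨B', hB'ne, hB'2, hB'enc, hB'sum⟩ := ih d2 hlen2 hh2 hgd2 hchain.2
      refine ⟨(t.length + 1) :: B', by simp, ?_, ?_, ?_⟩
      · intro x hx
        rcases List.mem_cons.mp hx with h | h
        · omega
        · exact hB'2 x h
      · rw [enc_cons _ _ hB'ne]
        simp only [Nat.add_sub_cancel]
        rw [hB'enc, ← ht]
        exact hsd
      · simp only [List.sum_cons]
        omega
theorem oneFree_composition_pinnedSolus_equiv (N : ℕ) (hN : 2 ≤ N) :
    ∃ e : {c : Composition N // ∀ p ∈ c.blocks, 2 ≤ p} ≃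
          {s : List Bool // s.length = N - 1 ∧ Pinned s ∧ Solus s},
      ∀ c : {c : Composition N // ∀ p ∈ c.blocks, 2 ≤ p},
        (c : Composition N).length = ((e c : List Bool)).count true + 1 ∧
        (c : Composition N).blocks.foldr max 0 = maxrun (e c : List Bool) + 1 := by
  classical
  have hbne : ∀ c : Composition N, c.blocks ≠ [] := by
    intro c h
    have := c.blocks_sum
    rw [h] at this
    simp at this
    omega
  have hprop : ∀ c : {c : Composition N // ∀ p ∈ c.blocks, 2 ≤ p},
      (enc c.1.blocks).length = N - 1 ∧ Pinned (enc c.1.blocks) ∧ Solus (enc c.1.blocks) := by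
    intro c
    have h2 := c.2
    have hne := hbne c.1
    have hlen := enc_length c.1.blocks hne h2
    rw [c.1.blocks_sum] at hlen
    refine ⟨by omega, ⟨?_, ?_, enc_getLast c.1.blocks hne h2⟩, enc_solus c.1.blocks h2⟩
    · intro h
      rw [h] at hlen
      simp at hlen
      omega
    · obtain ⟨b, B, hB⟩ := List.exists_cons_of_ne_nil hne
      rw [hB]
      exact enc_head b B (h2 b (hB ▸ List.mem_cons_self))
  set f : {c : Composition N // ∀ p ∈ c.blocks, 2 ≤ p} →
      {s : List Bool // s.length = N - 1 ∧ Pinned s ∧ Solus s} :=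
    fun c => ⟨enc c.1.blocks, hprop c⟩ with hf
  have hinj : Function.Injective f := by
    intro c1 c2 h
    have h' : enc c1.1.blocks = enc c2.1.blocks := congrArg Subtype.val h
    have : c1.1.blocks = c2.1.blocks := by
      rw [← dec_enc c1.1.blocks (hbne c1.1) c1.2, ← dec_enc c2.1.blocks (hbne c2.1) c2.2, h']
    exact Subtype.ext (Composition.ext this)
  have hsurj : Function.Surjective f := by
    rintro ⟨s, hlen, ⟨_, hh, hg⟩, hsol⟩
    obtain ⟨B, hBne, hB2, hBenc, hBsum⟩ := surj s.length s le_rfl hh hg hsol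
    have hsum : B.sum = N := by rw [hBsum, hlen]; omega
    exact ⟨⟨⟨B, fun {i} hi => by have := hB2 i hi; omega, hsum⟩, hB2⟩, Subtype.ext hBenc⟩
  refine ⟨Equiv.ofBijective f ⟨hinj, hsurj⟩, ?_⟩
  intro c
  have hval : ((Equiv.ofBijective f ⟨hinj, hsurj⟩) c : List Bool) = enc c.1.blocks := rfl
  rw [hval]
  have hne := hbne c.1
  constructor
  · have := enc_count c.1.blocks hne
    rw [Composition.length]
    omega
  · rw [maxrun_enc c.1.blocks hne]
    exact foldr_max_pred c.1.blocks hne c.2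
end

section
/- For every integer k ≥ 1, let B_k(n) denote the number of bitstrings of length n whose maxrun is strictly less than k (with B_k(0) = 1 for the empty string). Then in the ring of formal power series over ℤ, (Σ_{n≥0} B_k(n) z^n) · (1 − 2z + z^{k+1}) = 1 − z^k. -/
/-- `B k n` is the number of bitstrings of length `n` whose longest run of 0s is
strictly less than `k` (so `B k 0 = 1`, counting the empty string). -/
noncomputable def B (k n : ℕ) : ℕ :=
  Nat.card {s : List Bool // s.length = n ∧ maxrun s < k}

namespace BGF

/-- Length of the initial run of `false`s. -/
def lead (s : List Bool) : ℕ := (s.takeWhile (· == false)).length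

@[simp] lemma lead_nil : lead [] = 0 := rfl
@[simp] lemma lead_cons_true (s : List Bool) : lead (true :: s) = 0 := by simp [lead]
@[simp] lemma lead_cons_false (s : List Bool) : lead (false :: s) = lead s + 1 := by simp [lead]

lemma splitOn_cons_true (s : List Bool) : (true :: s).splitOn true = [] :: s.splitOn true := by
  simp [List.splitOn, List.splitOnP_cons]

lemma splitOn_cons_false (s : List Bool) :
    (false :: s).splitOn true = (s.splitOn true).modifyHead (false :: ·) := by
  simp [List.splitOn, List.splitOnP_cons]

lemma splitOn_aux (s : List Bool) : ∃ a r, s.splitOn true = a :: r ∧ a.length = lead s ∧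
    maxrun s = max (lead s) ((r.map List.length).foldr max 0) := by
  induction s with
  | nil => exact ⟨[], [], rfl, rfl, by simp [maxrun]⟩
  | cons b s ih =>
    obtain ⟨a, r, h1, h2, h3⟩ := ih
    cases b with
    | true =>
      refine ⟨[], s.splitOn true, splitOn_cons_true s, by simp, ?_⟩
      simp only [maxrun, splitOn_cons_true, List.map_cons, List.foldr_cons]
      simp only [maxrun] at h3
      simp [h3]
    | false =>
      refine ⟨false :: a, r, ?_, by simp [h2], ?_⟩
      · rw [splitOn_cons_false, h1]; rfl
      · simp only [maxrun, splitOn_cons_false, h1] at h3 ⊢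
        simp only [List.modifyHead, List.map_cons, List.foldr_cons, List.length_cons,
          lead_cons_false, h2] at h3 ⊢

lemma maxrun_nil : maxrun [] = 0 := by simp [maxrun]

lemma maxrun_cons_true (s : List Bool) : maxrun (true :: s) = maxrun s := by
  simp only [maxrun, splitOn_cons_true, List.map_cons, List.foldr_cons]
  simp

lemma maxrun_cons_false (s : List Bool) :
    maxrun (false :: s) = max (lead s + 1) (maxrun s) := by
  obtain ⟨a, r, h1, h2, h3⟩ := splitOn_aux s
  simp only [maxrun, splitOn_cons_false, h1]
  simp only [List.modifyHead, List.map_cons, List.foldr_cons, List.length_cons, h2, h3]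
  omega

lemma lead_le_maxrun (s : List Bool) : lead s ≤ maxrun s := by
  obtain ⟨a, r, h1, h2, h3⟩ := splitOn_aux s
  rw [h3]; exact le_max_left _ _

lemma lead_le_length (s : List Bool) : lead s ≤ s.length :=
  (List.takeWhile_prefix _).length_le

lemma maxrun_le_length (s : List Bool) : maxrun s ≤ s.length := by
  induction s with
  | nil => simp [maxrun_nil]
  | cons b s ih =>
    cases b with
    | true => rw [maxrun_cons_true]; simpa using Nat.le_succ_of_le ih
    | false =>
      rw [maxrun_cons_false]
      have := lead_le_length s
      simp only [List.length_cons]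
      omega

lemma maxrun_le_cons (b : Bool) (s : List Bool) : maxrun s ≤ maxrun (b :: s) := by
  cases b with
  | true => rw [maxrun_cons_true]
  | false => rw [maxrun_cons_false]; exact le_max_right _ _

lemma maxrun_suffix {t s : List Bool} (h : t <:+ s) : maxrun t ≤ maxrun s := by
  induction s with
  | nil => rw [List.suffix_nil] at h; subst h; exact le_rfl
  | cons b s ih =>
    rcases List.suffix_cons_iff.1 h with rfl | h'
    · exact le_rfl
    · exact (ih h').trans (maxrun_le_cons b s)

lemma lead_replicate_append (j : ℕ) (t : List Bool) :
    lead (List.replicate j false ++ true :: t) = j := by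
  induction j with
  | zero => simp
  | succ j ih => simp [List.replicate_succ, ih]

lemma maxrun_replicate_append (j : ℕ) (t : List Bool) :
    maxrun (List.replicate j false ++ true :: t) = max j (maxrun t) := by
  induction j with
  | zero => simp [maxrun_cons_true]
  | succ j ih =>
    rw [List.replicate_succ, List.cons_append, maxrun_cons_false, ih,
      lead_replicate_append]
    omega

lemma lead_replicate (n : ℕ) : lead (List.replicate n false) = n := by
  induction n with
  | zero => simp
  | succ n ih => simp [List.replicate_succ, ih]

lemma le_maxrun_replicate (n : ℕ) : n ≤ maxrun (List.replicate n false) := by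
  induction n with
  | zero => simp
  | succ n ih =>
    rw [List.replicate_succ, maxrun_cons_false, lead_replicate]
    omega

lemma takeWhile_eq_replicate_lead (s : List Bool) :
    s.takeWhile (· == false) = List.replicate (lead s) false := by
  rw [show lead s = (s.takeWhile (· == false)).length from rfl]
  rw [List.eq_replicate_length]
  intro b hb
  have := List.mem_takeWhile_imp hb
  simpa using this

lemma eq_replicate_of_le_maxrun (s : List Bool) (h : s.length ≤ maxrun s) :
    s = List.replicate s.length false := by
  cases s with
  | nil => simp
  | cons b s =>
    cases b with
    | true =>
      rw [maxrun_cons_true] at h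
      have := maxrun_le_length s
      simp only [List.length_cons] at h
      omega
    | false =>
      rw [maxrun_cons_false] at h
      have h1 := maxrun_le_length s
      have h2 := lead_le_length s
      have h3 : lead s = s.length := by
        rcases le_total (lead s + 1) (maxrun s) with hle | hle <;>
          [rw [max_eq_right hle] at h; rw [max_eq_left hle] at h] <;>
        simp only [List.length_cons] at h <;> omega
      have h4 : s.takeWhile (· == false) = s :=
        (List.takeWhile_prefix _).eq_of_length (by rw [← h3]; rfl)
      have h5 : s = List.replicate (lead s) false := by
        rw [← takeWhile_eq_replicate_lead, h4]
      rw [List.length_cons, List.replicate_succ, ← h3, ← h5]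

/-- The subtype counted by `B k n`. -/
abbrev S (k n : ℕ) := {s : List Bool // s.length = n ∧ maxrun s < k}

instance (n : ℕ) : Finite {s : List Bool // s.length = n} :=
  Finite.of_equiv (List.Vector Bool n) ⟨id, id, fun _ => rfl, fun _ => rfl⟩

instance (k n : ℕ) : Finite (S k n) :=
  Finite.of_injective (fun s => (⟨s.1, s.2.1⟩ : {s : List Bool // s.length = n}))
    (by intro a b h; cases a; cases b; simpa using h)

lemma card_length_eq (n : ℕ) : Nat.card {s : List Bool // s.length = n} = 2 ^ n := by
  have : Nat.card {s : List Bool // s.length = n} = Nat.card (List.Vector Bool n) := rfl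
  rw [this, Nat.card_eq_fintype_card, card_vector, Fintype.card_bool]

lemma B_lt {k n : ℕ} (h : n < k) : B k n = 2 ^ n := by
  rw [B, Nat.card_congr (Equiv.subtypeEquivRight (q := fun s : List Bool => s.length = n)
    (fun s => ⟨fun h' => h'.1, fun h' =>
      ⟨h', lt_of_le_of_lt ((maxrun_le_length s).trans (le_of_eq h')) h⟩⟩)),
    card_length_eq]

lemma B_self {k : ℕ} (hk : 1 ≤ k) : B k k + 1 = 2 ^ k := by
  classical
  haveI : Unique {v : {s : List Bool // s.length = k} // ¬ maxrun v.1 < k} := by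
    refine ⟨⟨⟨⟨List.replicate k false, by simp⟩, ?_⟩⟩, ?_⟩
    · simp only [not_lt]
      exact le_maxrun_replicate k
    · rintro ⟨⟨s, hs⟩, h⟩
      rw [not_lt] at h
      have h' : k ≤ maxrun s := h
      have : s = List.replicate s.length false :=
        eq_replicate_of_le_maxrun s (by omega)
      refine Subtype.ext (Subtype.ext ?_)
      simp only
      rw [this, hs]
  have e1 : S k k ≃ {v : {s : List Bool // s.length = k} // maxrun v.1 < k} :=
    (Equiv.subtypeSubtypeEquivSubtypeInter (fun s : List Bool => s.length = k)
      (fun s => maxrun s < k)).symm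
  calc B k k + 1
      = Nat.card {v : {s : List Bool // s.length = k} // maxrun v.1 < k}
        + Nat.card {v : {s : List Bool // s.length = k} // ¬ maxrun v.1 < k} := by
        have h2 : Nat.card {v : {s : List Bool // s.length = k} // ¬ maxrun v.1 < k} = 1 :=
          Nat.card_unique
        rw [B, Nat.card_congr e1, h2]
    _ = Nat.card ({v : {s : List Bool // s.length = k} // maxrun v.1 < k}
        ⊕ {v : {s : List Bool // s.length = k} // ¬ maxrun v.1 < k}) :=
        (Nat.card_sum).symm
    _ = Nat.card {s : List Bool // s.length = k} :=
        Nat.card_congr (Equiv.sumCompl _)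
    _ = 2 ^ k := card_length_eq k

section rec

variable {k m : ℕ}

/-- Forward map for the recurrence bijection. -/
def fwd (hk : 1 ≤ k) : (S k (m + k + 1)) ⊕ (S k m) → Bool × S k (m + k) := fun x =>
  match x with
  | Sum.inl s => (s.1.headI, ⟨s.1.tail, by
      rw [List.length_tail, s.2.1]; omega, (maxrun_suffix (List.tail_suffix s.1)).trans_lt s.2.2⟩)
  | Sum.inr t => (false, ⟨List.replicate (k - 1) false ++ true :: t.1, by
      simp [t.2.1]; omega, by
      rw [maxrun_replicate_append]
      exact max_lt (by omega) t.2.2⟩)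

/-- Backward map for the recurrence bijection. -/
def bwd (hk : 1 ≤ k) : Bool × S k (m + k) → (S k (m + k + 1)) ⊕ (S k m) := fun x =>
  if h : x.1 = false ∧ lead x.2.1 + 1 = k then
    Sum.inr ⟨(x.2.1.dropWhile (· == false)).tail, by
      have hd : lead x.2.1 + (x.2.1.dropWhile (· == false)).length = x.2.1.length := by
        conv_rhs => rw [← List.takeWhile_append_dropWhile (p := (· == false)) (l := x.2.1)]
        rw [List.length_append]; rfl
      have := x.2.2.1
      rw [List.length_tail]
      omega, by
      exact (maxrun_suffix ((List.tail_suffix _).trans (List.dropWhile_suffix _))).trans_lt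
        x.2.2.2⟩
  else
    Sum.inl ⟨x.1 :: x.2.1, by simp [x.2.2.1], by
      rcases hb : x.1 with _ | _
      · rw [maxrun_cons_false]
        have h1 : lead x.2.1 ≤ maxrun x.2.1 := lead_le_maxrun _
        have h2 := x.2.2.2
        have h3 : ¬(lead x.2.1 + 1 = k) := fun hc => h ⟨hb, hc⟩
        exact max_lt (by omega) h2
      · rw [maxrun_cons_true]; exact x.2.2.2⟩

lemma dropWhile_replicate_append (j : ℕ) (t : List Bool) :
    (List.replicate j false ++ true :: t).dropWhile (· == false) = true :: t := by
  induction j with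
  | zero => simp
  | succ j ih => simp [List.replicate_succ, ih]

lemma bwd_fwd (hk : 1 ≤ k) (x : (S k (m + k + 1)) ⊕ (S k m)) : bwd hk (fwd hk x) = x := by
  rcases x with ⟨s, hlen, hmax⟩ | ⟨t, hlen, hmax⟩
  · cases s with
    | nil => simp at hlen
    | cons b s =>
      cases b with
      | true =>
        rw [fwd, bwd, dif_neg (by simp)]
        exact congrArg Sum.inl (Subtype.ext rfl)
      | false =>
        have hlt : lead s + 1 < k := by
          have := hmax
          rw [maxrun_cons_false] at this
          omega
        rw [fwd, bwd, dif_neg (by simp; omega)]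
        exact congrArg Sum.inl (Subtype.ext rfl)
  · rw [fwd, bwd, dif_pos ?_]
    · refine congrArg Sum.inr (Subtype.ext ?_)
      simp only
      rw [dropWhile_replicate_append, List.tail_cons]
    · constructor
      · rfl
      · simp only
        rw [lead_replicate_append]
        omega

lemma fwd_bwd (hk : 1 ≤ k) (y : Bool × S k (m + k)) : fwd hk (bwd hk y) = y := by
  obtain ⟨b, u, hlen, hmax⟩ := y
  by_cases h : b = false ∧ lead u + 1 = k
  · rw [bwd, dif_pos h, fwd]
    obtain ⟨hb, hl⟩ := h
    subst hb
    refine Prod.ext rfl (Subtype.ext ?_)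
    simp only
    have hne : u.dropWhile (· == false) ≠ [] := by
      intro hc
      have h0 := List.takeWhile_append_dropWhile (p := (· == false)) (l := u)
      rw [hc, List.append_nil] at h0
      have h1 : lead u = u.length := by simp only [lead]; rw [h0]
      omega
    have hhead : (u.dropWhile (· == false)).head hne = true := by
      have := List.head_dropWhile_not (· == false) (l := u) hne
      simpa using this
    have hdrop : u.dropWhile (· == false)
        = true :: (u.dropWhile (· == false)).tail := by
      conv_lhs => rw [← List.cons_head_tail hne, hhead]
    calc List.replicate (k - 1) false ++ true :: (u.dropWhile (· == false)).tail
        = u.takeWhile (· == false) ++ u.dropWhile (· == false) := by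
          rw [takeWhile_eq_replicate_lead, ← hdrop, show lead u = k - 1 by omega]
      _ = u := List.takeWhile_append_dropWhile
  · rw [bwd, dif_neg h, fwd]
    exact Prod.ext rfl (Subtype.ext rfl)

lemma B_rec (hk : 1 ≤ k) (m : ℕ) : B k (m + k + 1) + B k m = 2 * B k (m + k) := by
  have e : (S k (m + k + 1)) ⊕ (S k m) ≃ Bool × S k (m + k) :=
    ⟨fwd hk, bwd hk, bwd_fwd hk, fwd_bwd hk⟩
  have h := Nat.card_congr e
  rw [Nat.card_sum, Nat.card_prod, Nat.card_eq_fintype_card (α := Bool),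
    Fintype.card_bool] at h
  exact h

end rec

end BGF

open PowerSeries in
theorem B_generating_function (k : ℕ) (hk : 1 ≤ k) :
    (PowerSeries.mk fun n => (B k n : ℤ)) * (1 - 2 * X + X ^ (k + 1))
      = 1 - X ^ k := by
  have expand : (PowerSeries.mk fun n => (B k n : ℤ)) * (1 - 2 * X + X ^ (k + 1))
      = (PowerSeries.mk fun n => (B k n : ℤ)) * X ^ 0
        - ((PowerSeries.mk fun n => (B k n : ℤ)) * X ^ 1
            + (PowerSeries.mk fun n => (B k n : ℤ)) * X ^ 1)
        + (PowerSeries.mk fun n => (B k n : ℤ)) * X ^ (k + 1) := by ring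
  rw [expand]
  ext n
  simp only [map_sub, map_add, PowerSeries.coeff_mul_X_pow', PowerSeries.coeff_one,
    PowerSeries.coeff_X_pow, PowerSeries.coeff_mk]
  rcases Nat.lt_trichotomy n k with hn | heq | hn
  · -- n < k
    rcases Nat.eq_zero_or_pos n with rfl | hpos
    · have h0 : B k 0 = 1 := by simpa using BGF.B_lt hk
      simp [h0, show ¬ (0:ℕ) = k by omega, show ¬ 1 ≤ 0 by omega,
        show ¬ k + 1 ≤ 0 by omega]
    · obtain ⟨a, rfl⟩ : ∃ a, n = a + 1 := ⟨n - 1, by omega⟩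
      have h1 : B k (a + 1) = 2 ^ (a + 1) := BGF.B_lt hn
      have h2 : B k a = 2 ^ a := BGF.B_lt (by omega)
      simp only [Nat.sub_zero, if_pos (show 1 ≤ a + 1 by omega),
        if_neg (show ¬ k + 1 ≤ a + 1 by omega), if_neg (show ¬ a + 1 = 0 by omega),
        if_neg (show ¬ a + 1 = k by omega), show a + 1 - 1 = a from rfl, h1, h2,
        if_pos (Nat.zero_le (a + 1))]
      push_cast
      rw [pow_succ]
      ring
  · -- n = k
    subst heq
    obtain ⟨a, hk2⟩ : ∃ a, n = a + 1 := ⟨n - 1, by omega⟩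
    have h1 : B n n + 1 = 2 ^ n := BGF.B_self hk
    have h2 : B n a = 2 ^ a := BGF.B_lt (by omega)
    simp only [Nat.sub_zero, if_pos (show 1 ≤ n by omega),
      if_neg (show ¬ n + 1 ≤ n by omega), if_neg (show ¬ n = 0 by omega),
      if_pos rfl, show n - 1 = a by omega, h2, if_pos (Nat.zero_le n)]
    have hp : (2 : ℤ) ^ n = 2 ^ a + 2 ^ a := by rw [hk2, pow_succ]; ring
    have hc : ((B n n : ℕ) : ℤ) + 1 = 2 ^ n := by exact_mod_cast h1
    push_cast
    linarith
  · -- n > k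
    obtain ⟨m, rfl⟩ : ∃ m, n = m + k + 1 := ⟨n - k - 1, by omega⟩
    have h := BGF.B_rec hk m
    simp only [Nat.sub_zero, if_pos (show 1 ≤ m + k + 1 by omega),
      if_pos (show k + 1 ≤ m + k + 1 by omega), if_neg (show ¬ m + k + 1 = 0 by omega),
      if_neg (show ¬ m + k + 1 = k by omega),
      show m + k + 1 - 1 = m + k by omega, show m + k + 1 - (k + 1) = m by omega,
      if_pos (Nat.zero_le (m + k + 1))]
    push_cast at h ⊢
    omega
end
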